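/- For each integer $m \ge 1$ let $S_m(f) = \sum_{j=1}^m f(j)$ and for $r \ge 2$, $1 \le k < r$ let $S_{r,k}(f) = S_r(f) - S_k(f) - S_{r-k}(f)$. For $f(x) = \log(x+1)$ one has $S_{r,k}(f) \le (r+1)\log 2 + \tfrac{3}{2}\log 2 - \tfrac{7}{8}$, and for $f(x) = \frac{1}{x+1}$ one has $S_k(f) + S_{r-k}(f) \le 2\log(\tfrac{r}{2}+1)$. -/
import Mathlib

open Nat

lemma stmt15_sumlog (m : ℕ) :
    ∑ j ∈ Finset.Icc 1 m, Real.log ((j : ℝ) + 1) = Real.log ((m + 1)! : ℝ) := by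
  induction m with
  | zero => simp
  | succ n ih =>
    rw [Finset.sum_Icc_succ_top (by omega), ih]
    have : ((n + 1 + 1)! : ℝ) = ((n : ℝ) + 1 + 1) * ((n + 1)! : ℝ) := by
      rw [Nat.factorial_succ]; push_cast; ring
    rw [this, Real.log_mul (by positivity)
      (Nat.cast_ne_zero.mpr (Nat.factorial_ne_zero _))]
    push_cast
    ring

lemma stmt15_sumharm (m : ℕ) :
    ∑ j ∈ Finset.Icc 1 m, (1 : ℝ) / ((j : ℝ) + 1) ≤ Real.log ((m : ℝ) + 1) := by
  induction m with
  | zero => simp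
  | succ n ih =>
    rw [Finset.sum_Icc_succ_top (by omega)]
    have h := Real.log_le_sub_one_of_pos
      (show (0:ℝ) < ((n : ℝ) + 1) / ((n : ℝ) + 2) by positivity)
    rw [Real.log_div (by positivity) (by positivity)] at h
    have h2 : ((n : ℝ) + 1) / ((n : ℝ) + 2) - 1 = -(1 / ((n : ℝ) + 2)) := by
      field_simp
      norm_num
    rw [h2] at h
    push_cast
    rw [show ((n : ℝ) + 1 + 1) = (n : ℝ) + 2 from by ring]
    linarith [ih, h]

lemma stmt15_choose_le (n i : ℕ) : n.choose i ≤ 2 ^ n := by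
  rw [← Nat.sum_range_choose n]
  rcases le_or_gt i n with h | h
  · exact Finset.single_le_sum (fun _ _ => Nat.zero_le _) (Finset.mem_range.mpr (by omega))
  · simp [Nat.choose_eq_zero_of_lt h]

/-- With `S_m(f) = ∑_{j=1}^m f(j)` and
`S_{r,k}(f) = S_r(f) - S_k(f) - S_{r-k}(f)`, for `f(x) = log(x+1)` one has
`S_{r,k}(f) ≤ (r+1) log 2 + (3/2) log 2 - 7/8`, and for `f(x) = 1/(x+1)` one
has `S_k(f) + S_{r-k}(f) ≤ 2 log(r/2 + 1)`. -/
theorem stmt15 (r k : ℕ) (hr : 2 ≤ r) (hk1 : 1 ≤ k) (hkr : k < r) :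
    ((∑ j ∈ Finset.Icc 1 r, Real.log ((j : ℝ) + 1))
        - (∑ j ∈ Finset.Icc 1 k, Real.log ((j : ℝ) + 1))
        - (∑ j ∈ Finset.Icc 1 (r - k), Real.log ((j : ℝ) + 1))
      ≤ ((r : ℝ) + 1) * Real.log 2 + 3 / 2 * Real.log 2 - 7 / 8)
    ∧ ((∑ j ∈ Finset.Icc 1 k, (1 : ℝ) / ((j : ℝ) + 1))
        + (∑ j ∈ Finset.Icc 1 (r - k), (1 : ℝ) / ((j : ℝ) + 1))
      ≤ 2 * Real.log ((r : ℝ) / 2 + 1)) := by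
  have hrk : (((r - k : ℕ) : ℝ)) = (r : ℝ) - (k : ℝ) := by
    push_cast [Nat.cast_sub hkr.le]; ring
  constructor
  · rw [stmt15_sumlog r, stmt15_sumlog k, stmt15_sumlog (r - k)]
    -- key natural number inequality
    have hfac : (r + 2)! ≤ 2 ^ (r + 2) * ((k + 1)! * ((r - k) + 1)!) := by
      have h1 : k + 1 ≤ r + 2 := by omega
      have h2 := Nat.choose_mul_factorial_mul_factorial h1
      have h3 : r + 2 - (k + 1) = (r - k) + 1 := by omega
      rw [h3] at h2
      calc (r + 2)! = (r + 2).choose (k + 1) * (k + 1)! * ((r - k) + 1)! := h2.symm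
        _ ≤ 2 ^ (r + 2) * (k + 1)! * ((r - k) + 1)! := by
            exact Nat.mul_le_mul_right _ (Nat.mul_le_mul_right _ (stmt15_choose_le _ _))
        _ = 2 ^ (r + 2) * ((k + 1)! * ((r - k) + 1)!) := by ring
    have hfacR : ((r + 2)! : ℝ) ≤ (2 : ℝ) ^ (r + 2) * (((k + 1)! : ℝ) * (((r - k) + 1)! : ℝ)) := by
      exact_mod_cast hfac
    have hlog : Real.log ((r + 2)! : ℝ) ≤
        ((r : ℝ) + 2) * Real.log 2 + Real.log ((k + 1)! : ℝ) + Real.log (((r - k) + 1)! : ℝ) := by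
      have := Real.log_le_log (by positivity) hfacR
      rw [Real.log_mul (by positivity) (by positivity),
        Real.log_mul (by positivity) (by positivity), Real.log_pow] at this
      push_cast at this ⊢
      linarith
    have hsplit : Real.log ((r + 2)! : ℝ) = Real.log ((r : ℝ) + 2) + Real.log ((r + 1)! : ℝ) := by
      have : ((r + 2)! : ℝ) = ((r : ℝ) + 2) * ((r + 1)! : ℝ) := by
        rw [show r + 2 = (r + 1) + 1 from rfl, Nat.factorial_succ]; push_cast; ring
      rw [this, Real.log_mul (by positivity)
        (Nat.cast_pos.mpr (Nat.factorial_pos _) |>.ne')]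
    have hlog4 : Real.log 4 ≤ Real.log ((r : ℝ) + 2) := by
      apply Real.log_le_log (by norm_num)
      have : (2 : ℝ) ≤ (r : ℝ) := by exact_mod_cast hr
      linarith
    have hlog4' : Real.log 4 = 2 * Real.log 2 := by
      rw [show (4 : ℝ) = 2 ^ 2 by norm_num, Real.log_pow]; push_cast; ring
    have hl2 : (0.6931471803 : ℝ) < Real.log 2 := Real.log_two_gt_d9
    linarith
  · have hk' := stmt15_sumharm k
    have hrk' := stmt15_sumharm (r - k)
    have hprod : ((k : ℝ) + 1) * (((r - k : ℕ) : ℝ) + 1) ≤ ((r : ℝ) / 2 + 1) ^ 2 := by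
      rw [hrk]
      nlinarith [sq_nonneg ((k : ℝ) - (r : ℝ) / 2)]
    have hlog : Real.log ((k : ℝ) + 1) + Real.log (((r - k : ℕ) : ℝ) + 1)
        ≤ 2 * Real.log ((r : ℝ) / 2 + 1) := by
      rw [← Real.log_mul (by positivity) (by positivity)]
      calc Real.log (((k : ℝ) + 1) * (((r - k : ℕ) : ℝ) + 1))
          ≤ Real.log (((r : ℝ) / 2 + 1) ^ 2) := Real.log_le_log (by positivity) hprod
        _ = 2 * Real.log ((r : ℝ) / 2 + 1) := by rw [Real.log_pow]; push_cast; ring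
    linarith
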